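/- Let $n\ge 2$ be an even integer and let $c_u$ for $0\le u\le n^2-1$ denote the aperiodic autocorrelations of the coefficient sequence of $h_n$. Then $2\sum_{u=0}^{n-1}|c_{nu+n/2}|^2 = n^2$. -/

import Mathlib

open Finset Complex

/-- The coefficients of `h_n`: `b_{nj+k} = ζ^{jk}` with `ζ = e^{2πi/n}`, for `0 ≤ j,k < n`;
here `j = m / n` and `k = m % n` for an index `m = nj + k`. -/
noncomputable def hCoef (n : ℕ) (m : ℕ) : ℂ :=
  Complex.exp (2 * Real.pi * Complex.I / n) ^ ((m / n) * (m % n))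

/-- The aperiodic autocorrelations `c_u = ∑_{0 ≤ m, m+u < n²} b_m conj(b_{m+u})` of the
coefficient sequence of `h_n`. -/
noncomputable def hCorr (n : ℕ) (u : ℕ) : ℂ :=
  ∑ m ∈ Finset.range (n ^ 2 - u), hCoef n m * (starRingEnd ℂ) (hCoef n (m + u))

noncomputable def ee (n : ℕ) (a : ℤ) : ℂ := Complex.exp (2 * Real.pi * Complex.I * a / n)

lemma ee_add (n : ℕ) (a b : ℤ) : ee n (a + b) = ee n a * ee n b := by
  rw [ee, ee, ee, ← Complex.exp_add]; congr 1; push_cast; ring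

lemma ee_zero (n : ℕ) : ee n 0 = 1 := by simp [ee]

lemma ee_conj (n : ℕ) (a : ℤ) : (starRingEnd ℂ) (ee n a) = ee n (-a) := by
  rw [ee, ee, ← Complex.exp_conj]; congr 1
  simp [map_div₀, map_ofNat, Complex.conj_I]

lemma ee_pow (n : ℕ) (a : ℤ) (t : ℕ) : ee n a ^ t = ee n (a * t) := by
  rw [ee, ee, ← Complex.exp_nat_mul]; congr 1; push_cast; ring

lemma ee_eq_one_iff (n : ℕ) (hn : 0 < n) (a : ℤ) : ee n a = 1 ↔ (n:ℤ) ∣ a := by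
  rw [ee, Complex.exp_eq_one_iff]
  have hn' : (n:ℂ) ≠ 0 := Nat.cast_ne_zero.mpr hn.ne'
  have hπ : (Real.pi:ℂ) ≠ 0 := Complex.ofReal_ne_zero.mpr Real.pi_ne_zero
  constructor
  · rintro ⟨m, hm⟩
    refine ⟨m, ?_⟩
    have h2 : (a:ℂ) = (n:ℂ) * (m:ℂ) := by
      have h3 : (2 * (Real.pi:ℂ) * Complex.I) * (a:ℂ) = (2 * (Real.pi:ℂ) * Complex.I) * ((n:ℂ) * m) := by
        field_simp at hm
        linear_combination (2 * (Real.pi:ℂ) * Complex.I) * hm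
      exact mul_left_cancel₀ (by simp [hπ, Complex.I_ne_zero]) h3
    exact_mod_cast h2
  · rintro ⟨m, rfl⟩
    exact ⟨m, by field_simp; simp⟩

lemma ee_period (n : ℕ) (hn : 0 < n) (a k : ℤ) : ee n (a + n * k) = ee n a := by
  rw [ee_add, (ee_eq_one_iff n hn (n*k)).mpr ⟨k, rfl⟩, mul_one]

lemma ee_half (s : ℕ) (hs : 0 < s) : ee (2*s) (s:ℤ) = -1 := by
  rw [ee]
  have hs' : (s:ℂ) ≠ 0 := Nat.cast_ne_zero.mpr hs.ne'
  rw [show 2 * (Real.pi:ℂ) * Complex.I * (((s:ℤ):ℂ)) / (((2*s:ℕ)):ℂ)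
      = (Real.pi:ℂ) * Complex.I from by push_cast; field_simp]
  exact Complex.exp_pi_mul_I

lemma ee_neg_half (s : ℕ) (hs : 0 < s) : ee (2*s) (-(s:ℤ)) = -1 := by
  have := ee_conj (2*s) (s:ℤ)
  rw [ee_half s hs] at this
  rw [← this]; simp
open Finset Complex

lemma sum_range_add' (f : ℕ → ℂ) (a b : ℕ) :
    ∑ m ∈ Finset.range (a + b), f m
      = ∑ m ∈ Finset.range a, f m + ∑ k ∈ Finset.range b, f (a + k) := by
  induction b with
  | zero => simp
  | succ b ih =>
    rw [show a + (b+1) = (a+b)+1 from rfl, Finset.sum_range_succ, ih,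
      Finset.sum_range_succ, add_assoc]

lemma sum_range_mul_add (f : ℕ → ℂ) (n q : ℕ) : ∀ r : ℕ,
    ∑ m ∈ Finset.range (n * q + r), f m
      = (∑ j ∈ Finset.range q, ∑ k ∈ Finset.range n, f (n*j + k))
        + ∑ k ∈ Finset.range r, f (n*q + k) := by
  induction q with
  | zero => intro r; simp
  | succ q ih =>
    intro r
    have h : ∀ k, f (n*q + (n+k)) = f (n*(q+1) + k) :=
      fun k => by rw [show n*q+(n+k) = n*(q+1)+k from by ring]
    rw [show n*(q+1) + r = n*q + (n + r) from by ring, ih (n+r),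
      sum_range_add' (fun k => f (n*q + k)) n r, Finset.sum_range_succ]
    simp only [h]
    ring

lemma sum_range_two_mul (s : ℕ) (g : ℕ → ℝ) :
    ∑ u ∈ Finset.range (2*s), g u = ∑ t ∈ Finset.range s, (g (2*t) + g (2*t+1)) := by
  induction s with
  | zero => simp
  | succ s ih =>
    rw [show 2*(s+1) = (2*s+1)+1 from by ring, Finset.sum_range_succ, Finset.sum_range_succ,
      ih, Finset.sum_range_succ, add_assoc]

noncomputable def Abar (n s : ℕ) (v : ℤ) : ℂ := ∑ k ∈ Finset.range s, ee n (-(v * k))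

lemma hCoef_eval (n : ℕ) (hn : 0 < n) (j k : ℕ) (hk : k < n) :
    hCoef n (n*j + k) = ee n ((j:ℤ) * k) := by
  unfold hCoef ee
  rw [Nat.mul_add_div hn, Nat.mul_add_mod, Nat.div_eq_of_lt hk, Nat.mod_eq_of_lt hk, add_zero,
    ← Complex.exp_nat_mul]
  congr 1; push_cast; ring

lemma corr_eval (s : ℕ) (hs0 : 0 < s) (u : ℕ) (hu : u < 2*s) :
    hCorr (2*s) ((2*s)*u + s)
      = if Even u then Abar (2*s) s ((u:ℤ)+1) else -Abar (2*s) s (u:ℤ) := by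
  set n := 2*s with hn
  have hn0 : 0 < n := by omega
  set q := n - u - 1 with hq
  have hqu : q + u + 1 = n := by omega
  have hm1 : ee n (-(s:ℤ)) = -1 := by rw [hn]; exact ee_neg_half s hs0
  have hp1 : ee n ((s:ℤ)) = -1 := by rw [hn]; exact ee_half s hs0
  have hN : n^2 - (n*u + s) = n*q + s := by
    apply Nat.sub_eq_of_eq_add
    calc n^2 = n * (q+u+1) := by rw [hqu, pow_two]
      _ = n*q + n*u + n := by ring
      _ = n*q + s + (n*u + s) := by rw [hn]; ring
  have key1 : ∀ j k : ℕ, k < s →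
      hCoef n (n*j+k) * (starRingEnd ℂ) (hCoef n ((n*j+k) + (n*u+s)))
        = ee n (-((j:ℤ)*s)) * (ee n (-((u:ℤ)*s)) * ee n (-((u:ℤ)*k))) := by
    intro j k hk
    have h2 : (n*j+k) + (n*u+s) = n*(j+u) + (k+s) := by rw [hn]; ring
    rw [hCoef_eval n hn0 j k (by omega), h2,
      hCoef_eval n hn0 (j+u) (k+s) (by omega), ee_conj, ← ee_add, ← ee_add, ← ee_add]
    congr 1; push_cast; ring
  have key2 : ∀ j k : ℕ, k < s →
      hCoef n (n*j+(s+k)) * (starRingEnd ℂ) (hCoef n ((n*j+(s+k)) + (n*u+s)))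
        = ee n ((j:ℤ)*s) * ee n (-(((u:ℤ)+1) * k)) := by
    intro j k hk
    have h2 : (n*j+(s+k)) + (n*u+s) = n*(j+u+1) + k := by rw [hn]; ring
    rw [hCoef_eval n hn0 j (s+k) (by omega), h2,
      hCoef_eval n hn0 (j+u+1) k (by omega), ee_conj, ← ee_add, ← ee_add]
    congr 1; push_cast; ring
  have hjpow : ∀ j : ℕ, ee n (-((j:ℤ)*s)) = (-1:ℂ)^j := by
    intro j
    calc ee n (-((j:ℤ)*s)) = ee n (-(s:ℤ)*j) := by congr 1; ring
      _ = ee n (-(s:ℤ))^j := (ee_pow n _ j).symm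
      _ = (-1:ℂ)^j := by rw [hm1]
  have hjpow' : ∀ j : ℕ, ee n ((j:ℤ)*s) = (-1:ℂ)^j := by
    intro j
    calc ee n ((j:ℤ)*s) = ee n ((s:ℤ)*j) := by congr 1; ring
      _ = ee n ((s:ℤ))^j := (ee_pow n _ j).symm
      _ = (-1:ℂ)^j := by rw [hp1]
  have hfirst : ∀ j : ℕ,
      ∑ k ∈ Finset.range s, hCoef n (n*j+k) * (starRingEnd ℂ) (hCoef n ((n*j+k) + (n*u+s)))
        = (-1:ℂ)^j * ((-1:ℂ)^u * Abar n s (u:ℤ)) := by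
    intro j
    rw [Finset.sum_congr rfl (fun k hk => key1 j k (Finset.mem_range.mp hk)),
      ← Finset.mul_sum, ← Finset.mul_sum, hjpow j, hjpow u, Abar]
  have hsecond : ∀ j : ℕ,
      ∑ k ∈ Finset.range s, hCoef n (n*j+(s+k)) * (starRingEnd ℂ) (hCoef n ((n*j+(s+k)) + (n*u+s)))
        = (-1:ℂ)^j * Abar n s ((u:ℤ)+1) := by
    intro j
    rw [Finset.sum_congr rfl (fun k hk => key2 j k (Finset.mem_range.mp hk)),
      ← Finset.mul_sum, hjpow' j, Abar]
  have hinner : ∀ j : ℕ,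
      ∑ k ∈ Finset.range n, hCoef n (n*j+k) * (starRingEnd ℂ) (hCoef n ((n*j+k) + (n*u+s)))
        = (-1:ℂ)^j * ((-1:ℂ)^u * Abar n s (u:ℤ) + Abar n s ((u:ℤ)+1)) := by
    intro j
    rw [show Finset.range n = Finset.range (s+s) from by rw [show n = s + s from by omega],
      sum_range_add' (fun k => hCoef n (n*j+k) * (starRingEnd ℂ) (hCoef n ((n*j+k) + (n*u+s)))) s s]
    have e1 : ∑ k ∈ Finset.range s,
        (fun k => hCoef n (n*j+k) * (starRingEnd ℂ) (hCoef n ((n*j+k) + (n*u+s)))) (s + k)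
        = (-1:ℂ)^j * Abar n s ((u:ℤ)+1) := by
      rw [← hsecond j]
    rw [e1, hfirst j]
    ring
  unfold hCorr
  rw [hN, sum_range_mul_add _ n q s]
  have houter : ∑ j ∈ Finset.range q, ∑ k ∈ Finset.range n,
      hCoef n (n*j+k) * (starRingEnd ℂ) (hCoef n ((n*j+k) + (n*u+s)))
        = (∑ j ∈ Finset.range q, (-1:ℂ)^j) * ((-1:ℂ)^u * Abar n s (u:ℤ) + Abar n s ((u:ℤ)+1)) := by
    rw [Finset.sum_congr rfl (fun j _ => hinner j), ← Finset.sum_mul]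
  rw [houter, hfirst q, neg_one_geom_sum]
  rcases Nat.even_or_odd u with he | ho
  · obtain ⟨a, ha⟩ := id he
    have hoq : Odd q := ⟨s - a - 1, by omega⟩
    simp only [if_neg (Nat.not_even_iff_odd.mpr hoq), if_pos he,
      Odd.neg_one_pow hoq, Even.neg_one_pow he]
    ring
  · obtain ⟨a, ha⟩ := id ho
    have heq : Even q := ⟨s - a - 1, by omega⟩
    simp only [if_pos heq, if_neg (Nat.not_even_iff_odd.mpr ho),
      Even.neg_one_pow heq, Odd.neg_one_pow ho]
    ring

lemma geom_inner (s : ℕ) (hs0 : 0 < s) (d : ℤ) (hd1 : d ≠ 0) (hd2 : d.natAbs < s) :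
    ∑ t ∈ Finset.range s, ee (2*s) ((2*(t:ℤ)+1) * d) = 0 := by
  have h1 : ∀ t : ℕ, ee (2*s) ((2*(t:ℤ)+1) * d) = ee (2*s) d * (ee (2*s) (2*d))^t := by
    intro t; rw [ee_pow, ← ee_add]; congr 1; ring
  rw [Finset.sum_congr rfl (fun t _ => h1 t), ← Finset.mul_sum]
  have hx : ee (2*s) (2*d) ≠ 1 := by
    intro h
    rw [ee_eq_one_iff _ (by omega : 0 < 2*s)] at h
    have h2 : ((2*s:ℕ):ℤ) ≤ |2*d| :=
      Int.le_of_dvd (abs_pos.mpr (by omega)) ((dvd_abs _ _).mpr h)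
    have h3 : |2*d| = ((2*d).natAbs : ℤ) := Int.abs_eq_natAbs _
    have h4 : (2*d).natAbs = 2 * d.natAbs := by
      rw [Int.natAbs_mul]; rfl
    omega
  rw [geom_sum_eq hx s]
  have hxs : ee (2*s) (2*d) ^ s = 1 := by
    rw [ee_pow, ee_eq_one_iff _ (by omega)]
    exact ⟨d, by push_cast; ring⟩
  rw [hxs]
  simp

lemma key_sum (s : ℕ) (hs0 : 0 < s) (k k' : ℕ) (hk : k < s) (hk' : k' < s) :
    ∑ t ∈ Finset.range s, ee (2*s) ((2*(t:ℤ)+1) * ((k':ℤ) - k)) = if k' = k then (s:ℂ) else 0 := by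
  by_cases h : k' = k
  · subst h
    simp [sub_self, mul_zero, ee_zero]
  · rw [if_neg h]
    refine geom_inner s hs0 _ (sub_ne_zero.mpr (by exact_mod_cast h)) (by omega)

lemma abar_sq_sum (s : ℕ) (hs0 : 0 < s) :
    ∑ t ∈ Finset.range s, Abar (2*s) s (2*(t:ℤ)+1) * (starRingEnd ℂ) (Abar (2*s) s (2*(t:ℤ)+1))
      = (s:ℂ) * s := by
  have hstep : ∀ t : ℕ, Abar (2*s) s (2*(t:ℤ)+1) * (starRingEnd ℂ) (Abar (2*s) s (2*(t:ℤ)+1))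
      = ∑ k ∈ Finset.range s, ∑ k' ∈ Finset.range s, ee (2*s) ((2*(t:ℤ)+1) * ((k':ℤ) - k)) := by
    intro t
    rw [Abar, map_sum, Finset.sum_mul_sum]
    refine Finset.sum_congr rfl (fun k _ => Finset.sum_congr rfl (fun k' _ => ?_))
    rw [ee_conj, ← ee_add]
    congr 1; ring
  rw [Finset.sum_congr rfl (fun t _ => hstep t), Finset.sum_comm]
  have h2 : ∀ k ∈ Finset.range s,
      ∑ t ∈ Finset.range s, ∑ k' ∈ Finset.range s, ee (2*s) ((2*(t:ℤ)+1) * ((k':ℤ) - k))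
        = (s:ℂ) := by
    intro k hk
    rw [Finset.sum_comm]
    rw [Finset.sum_congr rfl
      (fun k' hk' => key_sum s hs0 k k' (Finset.mem_range.mp hk) (Finset.mem_range.mp hk'))]
    rw [Finset.sum_ite_eq' (Finset.range s) k (fun _ => (s:ℂ)), if_pos hk]
  rw [Finset.sum_congr rfl h2, Finset.sum_const, Finset.card_range, nsmul_eq_mul]

/-- For even `n ≥ 2`, `2 ∑_{u=0}^{n-1} |c_{nu+n/2}|² = n²`. -/
theorem hCorr_sum_sq_half (n : ℕ) (hn : 2 ≤ n) (hne : Even n) :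
    2 * ∑ u ∈ Finset.range n, ‖hCorr n (n * u + n / 2)‖ ^ 2 = (n : ℝ) ^ 2 := by
  obtain ⟨s, rfl⟩ := hne
  have hs0 : 0 < s := by omega
  rw [show s + s = 2*s from by ring, Nat.mul_div_cancel_left s (by norm_num)]
  simp only [Complex.sq_norm]
  rw [sum_range_two_mul s (fun u => Complex.normSq (hCorr (2*s) ((2*s)*u + s)))]
  have hterm : ∀ t ∈ Finset.range s,
      Complex.normSq (hCorr (2*s) ((2*s)*(2*t)+s)) + Complex.normSq (hCorr (2*s) ((2*s)*(2*t+1)+s))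
        = 2 * Complex.normSq (Abar (2*s) s (2*(t:ℤ)+1)) := by
    intro t ht
    have ht' := Finset.mem_range.mp ht
    rw [corr_eval s hs0 (2*t) (by omega), corr_eval s hs0 (2*t+1) (by omega),
      if_pos ⟨t, by ring⟩, if_neg (Nat.not_even_iff_odd.mpr ⟨t, rfl⟩), Complex.normSq_neg,
      show ((2*t:ℕ):ℤ)+1 = 2*(t:ℤ)+1 from by push_cast; ring,
      show ((2*t+1:ℕ):ℤ) = 2*(t:ℤ)+1 from by push_cast; ring]
    ring
  rw [Finset.sum_congr rfl hterm, ← Finset.mul_sum]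
  have hA : ∑ t ∈ Finset.range s, Complex.normSq (Abar (2*s) s (2*(t:ℤ)+1)) = (s:ℝ)*s := by
    have hC : ((∑ t ∈ Finset.range s, Complex.normSq (Abar (2*s) s (2*(t:ℤ)+1)) : ℝ) : ℂ)
        = (s:ℂ)*s := by
      push_cast
      rw [← abar_sq_sum s hs0]
      exact Finset.sum_congr rfl (fun t _ => (Complex.mul_conj _).symm)
    exact_mod_cast hC
  rw [hA]
  push_cast
  ring
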